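/- Let u : [0, x₀] → ℝ be C² with u(0) = h > 0, u'(0) = 0, and u'' = (1 + (u')²)(x·u' − u) with u'' < 0 on (0, x₀]. Then for all x in the domain, x·u'(x) − u(x) ≤ −h − (h/2)x², u'(x) ≤ −h·x − (h/6)x³, and u(x) ≤ h − (h/2)x² − (h/24)x⁴. Consequently u(x) < 0 for x ≥ √(−6 + 2√15). -/

import Mathlib

/-- Barrier estimates for the self-similar profile ODE with symmetric initial
data of height `h`: `x u' - u ≤ -h - (h/2)x²`, `u' ≤ -h x - (h/6)x³`,
`u ≤ h - (h/2)x² - (h/24)x⁴`; consequently `u(x) < 0` for `x ≥ √(-6 + 2√15)`. -/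
theorem barrier_estimates (u : ℝ → ℝ) (x₀ h : ℝ) (hx₀ : 0 < x₀) (hh : 0 < h)
    (hC2 : ContDiffOn ℝ 2 u (Set.Icc 0 x₀))
    (hu0 : u 0 = h) (hu'0 : deriv u 0 = 0)
    (hode : ∀ x ∈ Set.Icc 0 x₀,
      deriv (deriv u) x = (1 + (deriv u x) ^ 2) * (x * deriv u x - u x))
    (hconc : ∀ x ∈ Set.Ioc 0 x₀, deriv (deriv u) x < 0) :
    (∀ x ∈ Set.Icc 0 x₀,
      x * deriv u x - u x ≤ -h - h / 2 * x ^ 2 ∧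
      deriv u x ≤ -(h * x) - h / 6 * x ^ 3 ∧
      u x ≤ h - h / 2 * x ^ 2 - h / 24 * x ^ 4) ∧
    (∀ x ∈ Set.Icc 0 x₀, Real.sqrt (-6 + 2 * Real.sqrt 15) ≤ x → u x < 0) := by
  have h0mem : (0:ℝ) ∈ Set.Icc 0 x₀ := ⟨le_rfl, hx₀.le⟩
  have hD0 : deriv (deriv u) 0 = -h := by
    have := hode 0 h0mem
    rw [hu'0, hu0] at this; simpa using this
  have hd2 : ∀ x ∈ Set.Icc 0 x₀, DifferentiableAt ℝ (deriv u) x := by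
    intro x hx
    rcases eq_or_lt_of_le hx.1 with h0 | h0
    · apply differentiableAt_of_deriv_ne_zero
      rw [← h0, hD0]; exact neg_ne_zero.2 hh.ne'
    · exact differentiableAt_of_deriv_ne_zero (hconc x ⟨h0, hx.2⟩).ne
  have hd1 : ∀ x ∈ Set.Ioo 0 x₀, DifferentiableAt ℝ u x := by
    intro x hx
    exact (hC2.contDiffAt (Icc_mem_nhds hx.1 hx.2)).differentiableAt (by norm_num)
  have hcu : ContinuousOn u (Set.Icc 0 x₀) := hC2.continuousOn
  have hcu' : ContinuousOn (deriv u) (Set.Icc 0 x₀) :=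
    fun x hx => ((hd2 x hx).continuousAt).continuousWithinAt
  set f : ℝ → ℝ := fun x => x * deriv u x - u x with hfdef
  have hcf : ContinuousOn f (Set.Icc 0 x₀) := (continuousOn_id.mul hcu').sub hcu
  have hf0 : f 0 = -h := by simp [hfdef, hu0]
  have hfd : ∀ x ∈ Set.Ioo 0 x₀, HasDerivAt f (x * deriv (deriv u) x) x := by
    intro x hx
    have h1 : HasDerivAt u (deriv u x) x := (hd1 x hx).hasDerivAt
    have h2 : HasDerivAt (deriv u) (deriv (deriv u) x) x :=
      (hd2 x ⟨hx.1.le, hx.2.le⟩).hasDerivAt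
    have h3 := ((hasDerivAt_id x).mul h2).sub h1
    exact h3.congr_deriv (by rw [id_eq]; ring)
  have hfanti : StrictAntiOn f (Set.Icc 0 x₀) := by
    apply strictAntiOn_of_deriv_neg (convex_Icc 0 x₀) hcf
    intro x hx
    rw [interior_Icc] at hx
    rw [(hfd x hx).deriv]
    exact mul_neg_of_pos_of_neg hx.1 (hconc x ⟨hx.1, hx.2.le⟩)
  have hflt : ∀ x ∈ Set.Icc 0 x₀, 0 < x → f x < -h := by
    intro x hx h0
    have := hfanti h0mem hx h0
    rwa [hf0] at this
  have hDle : ∀ x ∈ Set.Icc 0 x₀, 0 < x → deriv (deriv u) x ≤ f x := by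
    intro x hx h0
    have hofx := hode x hx
    have hfx : f x < -h := hflt x hx h0
    have hfx' : x * deriv u x - u x = f x := rfl
    rw [hfx'] at hofx
    nlinarith [sq_nonneg (deriv u x)]
  -- Step B : f x ≤ -h - h/2 x²
  set F : ℝ → ℝ := fun x => f x + h + h / 2 * x ^ 2 with hFdef
  have hF0 : F 0 = 0 := by simp [hFdef, hf0]
  have hFanti : StrictAntiOn F (Set.Icc 0 x₀) := by
    apply strictAntiOn_of_deriv_neg (convex_Icc 0 x₀)
    · exact (hcf.add continuousOn_const).add (continuousOn_const.mul (continuousOn_pow 2))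
    intro x hx
    rw [interior_Icc] at hx
    have hd : HasDerivAt F (x * deriv (deriv u) x + h * x) x := by
      have h3 := ((hfd x hx).add_const h).add ((hasDerivAt_pow 2 x).const_mul (h/2))
      exact h3.congr_deriv (by push_cast; ring)
    rw [hd.deriv]
    have h1 := hDle x ⟨hx.1.le, hx.2.le⟩ hx.1
    have h2 := hflt x ⟨hx.1.le, hx.2.le⟩ hx.1
    have hneg : deriv (deriv u) x + h < 0 := by linarith
    have := mul_neg_of_pos_of_neg hx.1 hneg
    nlinarith
  have hFlt : ∀ x ∈ Set.Icc 0 x₀, 0 < x → F x < 0 := by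
    intro x hx h0
    have := hFanti h0mem hx h0
    rwa [hF0] at this
  have hFle : ∀ x ∈ Set.Icc 0 x₀, F x ≤ 0 := by
    intro x hx
    rcases eq_or_lt_of_le hx.1 with h0 | h0
    · rw [← h0, hF0]
    · exact (hFlt x hx h0).le
  -- Step C : u' x ≤ -h x - h/6 x³
  set G : ℝ → ℝ := fun x => deriv u x + h * x + h / 6 * x ^ 3 with hGdef
  have hG0 : G 0 = 0 := by simp [hGdef, hu'0]
  have hGanti : StrictAntiOn G (Set.Icc 0 x₀) := by
    apply strictAntiOn_of_deriv_neg (convex_Icc 0 x₀)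
    · exact (hcu'.add (continuousOn_const.mul continuousOn_id)).add
        (continuousOn_const.mul (continuousOn_pow 3))
    intro x hx
    rw [interior_Icc] at hx
    have hd : HasDerivAt G (deriv (deriv u) x + h + h / 2 * x ^ 2) x := by
      have h3 := (((hd2 x ⟨hx.1.le, hx.2.le⟩).hasDerivAt).add
        ((hasDerivAt_id x).const_mul h)).add ((hasDerivAt_pow 3 x).const_mul (h/6))
      exact h3.congr_deriv (by push_cast; ring)
    rw [hd.deriv]
    have h1 := hDle x ⟨hx.1.le, hx.2.le⟩ hx.1
    have h2 : f x + h + h / 2 * x ^ 2 < 0 := hFlt x ⟨hx.1.le, hx.2.le⟩ hx.1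
    exact lt_of_le_of_lt (add_le_add_left (add_le_add_left h1 h) (h / 2 * x ^ 2)) h2
  have hGlt : ∀ x ∈ Set.Icc 0 x₀, 0 < x → G x < 0 := by
    intro x hx h0
    have := hGanti h0mem hx h0
    rwa [hG0] at this
  have hGle : ∀ x ∈ Set.Icc 0 x₀, G x ≤ 0 := by
    intro x hx
    rcases eq_or_lt_of_le hx.1 with h0 | h0
    · rw [← h0, hG0]
    · exact (hGlt x hx h0).le
  -- Step D : u x ≤ h - h/2 x² - h/24 x⁴
  set H : ℝ → ℝ := fun x => u x - h + h / 2 * x ^ 2 + h / 24 * x ^ 4 with hHdef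
  have hH0 : H 0 = 0 := by simp [hHdef, hu0]
  have hHanti : StrictAntiOn H (Set.Icc 0 x₀) := by
    apply strictAntiOn_of_deriv_neg (convex_Icc 0 x₀)
    · exact ((hcu.sub continuousOn_const).add
        (continuousOn_const.mul (continuousOn_pow 2))).add
        (continuousOn_const.mul (continuousOn_pow 4))
    intro x hx
    rw [interior_Icc] at hx
    have hd : HasDerivAt H (deriv u x + h * x + h / 6 * x ^ 3) x := by
      have h3 := (((hd1 x hx).hasDerivAt.sub_const h).add
        ((hasDerivAt_pow 2 x).const_mul (h/2))).add ((hasDerivAt_pow 4 x).const_mul (h/24))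
      exact h3.congr_deriv (by push_cast; ring)
    rw [hd.deriv]
    exact hGlt x ⟨hx.1.le, hx.2.le⟩ hx.1
  have hHlt : ∀ x ∈ Set.Icc 0 x₀, 0 < x → H x < 0 := by
    intro x hx h0
    have := hHanti h0mem hx h0
    rwa [hH0] at this
  have hHle : ∀ x ∈ Set.Icc 0 x₀, H x ≤ 0 := by
    intro x hx
    rcases eq_or_lt_of_le hx.1 with h0 | h0
    · rw [← h0, hH0]
    · exact (hHlt x hx h0).le
  constructor
  · intro x hx
    refine ⟨?_, ?_, ?_⟩
    · have := hFle x hx; simp only [hFdef, hfdef] at this; linarith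
    · have := hGle x hx; simp only [hGdef] at this; linarith
    · have := hHle x hx; simp only [hHdef] at this; linarith
  · intro x hx hxs
    have hs15 : Real.sqrt 15 > 3 := by
      nlinarith [Real.sq_sqrt (show (0:ℝ) ≤ 15 by norm_num), Real.sqrt_nonneg 15]
    have ht : (0:ℝ) ≤ -6 + 2 * Real.sqrt 15 := by linarith
    have hc0 : 0 < Real.sqrt (-6 + 2 * Real.sqrt 15) := Real.sqrt_pos.2 (by linarith)
    have hx0 : 0 < x := lt_of_lt_of_le hc0 hxs
    have hsq : Real.sqrt (-6 + 2 * Real.sqrt 15) ^ 2 = -6 + 2 * Real.sqrt 15 :=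
      Real.sq_sqrt ht
    have hx2 : -6 + 2 * Real.sqrt 15 ≤ x ^ 2 := by
      rw [← hsq]
      exact pow_le_pow_left₀ hc0.le hxs 2
    have h15 : Real.sqrt 15 ^ 2 = 15 := Real.sq_sqrt (by norm_num)
    have hx4 : (-6 + 2 * Real.sqrt 15) ^ 2 ≤ (x ^ 2) ^ 2 := pow_le_pow_left₀ ht hx2 2
    have hub : h - h / 2 * x ^ 2 - h / 24 * x ^ 4 ≤ 0 := by
      nlinarith [hx4, hx2, h15, hs15, hh]
    have := hHlt x hx hx0
    simp only [hHdef] at this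
    linarith
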